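/- (Corollary 1) Under the Sequential Measurements model, if a measurement is repeated and no intervening incompatible measurements are performed, then the outcome μ-almost surely remains unchanged: for every density matrix ρ, every n ≥ 2, every sequence of positions (i₁,j₁), …, (iₙ,jₙ) ∈ {1,2,3}², and every k with 1 ≤ k ≤ n−1 such that V_{iₙjₙ} = V_{i_kj_k} and the operators V_{i_kj_k}, V_{i_{k+1}j_{k+1}}, …, V_{iₙjₙ} are mutually commuting, the following holds for all outcomes s₁,…,sₙ ∈ {−1,+1}: if sₙ ≠ s_k then μ({u ∈ Ω : g(φ_{i₁j₁}(u)) = s₁, …, g(φ_{iₙjₙ}(⋯(φ_{i₁j₁}(u))⋯)) = sₙ}) = 0, and if sₙ = s_k then this probability equals μ({u ∈ Ω : g(φ_{i₁j₁}(u)) = s₁, …, g(φ_{i_{n−1}j_{n−1}}(⋯(φ_{i₁j₁}(u))⋯)) = s_{n−1}}). -/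

import Mathlib

open Matrix MeasureTheory
open scoped Kronecker ComplexOrder

noncomputable section
open scoped Classical

/-- The Pauli matrix σx. -/
def σx : Matrix (Fin 2) (Fin 2) ℂ := !![0, 1; 1, 0]

/-- The Pauli matrix σy. -/
def σy : Matrix (Fin 2) (Fin 2) ℂ := !![0, -Complex.I; Complex.I, 0]

/-- The Pauli matrix σz. -/
def σz : Matrix (Fin 2) (Fin 2) ℂ := !![1, 0; 0, -1]

/-- The Mermin–Peres square of nine 4×4 operators, `MP i j` being the entry in
row `i`, column `j`. -/
def MP : Fin 3 → Fin 3 → Matrix (Fin 2 × Fin 2) (Fin 2 × Fin 2) ℂ :=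
  ![![σx ⊗ₖ (1 : Matrix (Fin 2) (Fin 2) ℂ), (1 : Matrix (Fin 2) (Fin 2) ℂ) ⊗ₖ σx, σx ⊗ₖ σx],
    ![(1 : Matrix (Fin 2) (Fin 2) ℂ) ⊗ₖ σy, σy ⊗ₖ (1 : Matrix (Fin 2) (Fin 2) ℂ), σy ⊗ₖ σy],
    ![σx ⊗ₖ σy, σy ⊗ₖ σx, σz ⊗ₖ σz]]

/-- The projection `Π_{ij}^s = (I + s·V_{ij})/2` onto the `s`-eigenspace of the
Mermin–Peres operator at position `p = (i,j)`, for `s ∈ {−1,+1}`. -/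
def Proj (p : Fin 3 × Fin 3) (s : ℝ) : Matrix (Fin 2 × Fin 2) (Fin 2 × Fin 2) ℂ :=
  (2⁻¹ : ℂ) • (1 + (s : ℂ) • MP p.1 p.2)

/-- The hidden variable space `Ω = [0,1]^ℕ`, realized as sequences of reals
(the relevant probability measure is supported on `[0,1]^ℕ`). -/
abbrev HV : Type := ℕ → ℝ

/-- `Mset n` is the set of hidden states whose first `n` coordinates have been
written by measurements (i.e. `27·u_k` is an integer exactly for `k < n`).
Coordinates are indexed from 0 here, so `u k` is the `(k+1)`-th coordinate. -/
def Mset (n : ℕ) : Set HV :=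
  {u | (∀ k < n, ∃ m : ℤ, 27 * u k = m) ∧ ∀ k ≥ n, ¬∃ m : ℤ, 27 * u k = m}

/-- The integer `m ∈ {0,…,26}` encoded in the `k`-th coordinate of `u`. -/
def code (u : HV) (k : ℕ) : ℕ := (⌊27 * u k⌋).toNat

/-- Decode the position (row, column) of the recorded measurement in the `k`-th
coordinate: writing `code u k = (d₂d₁d₀)₃`, the position is `(d₁, d₀)`
(0-indexed, corresponding to row `d₁+1`, column `d₀+1`). -/
def decPos (u : HV) (k : ℕ) : Fin 3 × Fin 3 :=
  (⟨code u k / 3 % 3, by omega⟩, ⟨code u k % 3, by omega⟩)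

/-- Decode the recorded outcome in the `k`-th coordinate: `−1` if the leading
base-three digit `d₂` is `0`, and `+1` if it is `2`. -/
def decSign (u : HV) (k : ℕ) : ℝ := if code u k / 9 % 3 = 0 then -1 else 1

/-- The history operator `Π_{i₁j₁}^{s₁} ⋯ Π_{i_nj_n}^{s_n}` encoded in the first
`n` coordinates of `u`. -/
def hist (u : HV) (n : ℕ) : Matrix (Fin 2 × Fin 2) (Fin 2 × Fin 2) ℂ :=
  ((List.range n).map fun k => Proj (decPos u k) (decSign u k)).prod

/-- The conditional CDF `F_{ij}(x | u₁,…,u_n)` for a measurement of `V_{ij}`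
given the measurement history recorded in the first `n` coordinates of `u`:
`F_{ij}(−1 | ⋯) = Tr[ρ·Π_{i₁j₁}^{s₁}⋯Π_{i_nj_n}^{s_n}·Π_{ij}^{−1}] /
Tr[ρ·Π_{i₁j₁}^{s₁}⋯Π_{i_nj_n}^{s_n}]` and `F_{ij}(x | ⋯) = 1` for `x = +1`. -/
def F (ρ : Matrix (Fin 2 × Fin 2) (Fin 2 × Fin 2) ℂ) (p : Fin 3 × Fin 3)
    (x : ℝ) (u : HV) (n : ℕ) : ℝ :=
  if x = -1 then
    ((ρ * hist u n * Proj p (-1)).trace).re / ((ρ * hist u n).trace).re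
  else 1

/-- The measurement outcome `χ_{ij}(u) = inf{x ∈ {−1,+1} : F_{ij}(x | u₁,…,u_n) > u_{n+1}}`
for a measurement of `V_{ij}` on a hidden state `u ∈ Mset n`. -/
def chi (ρ : Matrix (Fin 2 × Fin 2) (Fin 2 × Fin 2) ℂ) (p : Fin 3 × Fin 3)
    (u : HV) (n : ℕ) : ℝ :=
  sInf {x : ℝ | (x = -1 ∨ x = 1) ∧ F ρ p x u n > u n}

/-- The encoding map `ν_{ij}`: the outcome `x = ∓1` of a measurement of `V_{ij}`
is recorded as the coordinate value `(3(i−1)+(j−1))/27` resp.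
`(18+3(i−1)+(j−1))/27` (here `p.1, p.2` are the 0-indexed row and column). -/
def enc (p : Fin 3 × Fin 3) (x : ℝ) : ℝ :=
  if x = -1 then (3 * (p.1 : ℕ) + (p.2 : ℕ) : ℕ) / 27
  else ((18 + 3 * (p.1 : ℕ) + (p.2 : ℕ) : ℕ) : ℝ) / 27

/-- The measurement interaction map `φ_{ij}` for the operator at position `p`,
given initial quantum state `ρ`: if `u ∈ Mset n`, the `(n+1)`-th coordinate of
`u` is replaced by `ν_{ij}(χ_{ij}(u))`; otherwise `u` is unchanged. -/
def phi (ρ : Matrix (Fin 2 × Fin 2) (Fin 2 × Fin 2) ℂ) (p : Fin 3 × Fin 3)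
    (u : HV) : HV :=
  if h : ∃ n, u ∈ Mset n then
    Function.update u h.choose (enc p (chi ρ p u h.choose))
  else u

/-- The outcome map `g`: if `u ∈ Mset n` with `n ≥ 1` (the largest—indeed, the
unique—such `n`), then `g(u) = sign(2·u_n − 1)` where `u_n` is the last recorded
coordinate; otherwise `g(u) = 0`. -/
def gOut (u : HV) : ℝ :=
  if h : ∃ n, u ∈ Mset (n + 1) then Real.sign (2 * u h.choose - 1) else 0

/-- The hidden state obtained from `u` by performing, in order, the measurements
at the positions listed in `l`. -/
def runPhi (ρ : Matrix (Fin 2 × Fin 2) (Fin 2 × Fin 2) ℂ)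
    (l : List (Fin 3 × Fin 3)) (u : HV) : HV :=
  l.foldl (fun v p => phi ρ p v) u

/-- The event that the sequential measurements at positions `pos 0, …, pos (n−1)`
yield the outcomes `s 0, …, s (n−1)`:  the `k`-th outcome is read off by `g`
after the first `k+1` interaction maps have been applied. -/
def seqEvent (ρ : Matrix (Fin 2 × Fin 2) (Fin 2 × Fin 2) ℂ) {n : ℕ}
    (pos : Fin n → Fin 3 × Fin 3) (s : Fin n → ℝ) : Set HV :=
  {u | ∀ k : Fin n, gOut (runPhi ρ ((List.ofFn pos).take (k + 1)) u) = s k}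

/-- `μ` is the infinite product of uniform probability measures on `[0,1]`,
characterized by its values on cylinder sets. -/
def IsUniformProductMeasure (μ : Measure HV) : Prop :=
  ∀ (J : Finset ℕ) (t : ℕ → Set ℝ), (∀ k, MeasurableSet (t k)) →
    μ {u | ∀ k ∈ J, u k ∈ t k} = ∏ k ∈ J, volume (t k ∩ Set.Icc (0 : ℝ) 1)


/-! ### Auxiliary lemmas -/

lemma sx_sq : σx * σx = 1 := by
  rw [σx, show (1 : Matrix (Fin 2) (Fin 2) ℂ) = !![1,0;0,1] from Matrix.one_fin_two]
  norm_num [Matrix.mul_fin_two]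
lemma sy_sq : σy * σy = 1 := by
  rw [σy, show (1 : Matrix (Fin 2) (Fin 2) ℂ) = !![1,0;0,1] from Matrix.one_fin_two]
  norm_num [Matrix.mul_fin_two, Complex.I_mul_I]
lemma sz_sq : σz * σz = 1 := by
  rw [σz, show (1 : Matrix (Fin 2) (Fin 2) ℂ) = !![1,0;0,1] from Matrix.one_fin_two]
  norm_num [Matrix.mul_fin_two]

lemma kron_sq {A B : Matrix (Fin 2) (Fin 2) ℂ} (hA : A * A = 1) (hB : B * B = 1) :
    (A ⊗ₖ B) * (A ⊗ₖ B) = 1 := by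
  rw [← Matrix.mul_kronecker_mul, hA, hB, Matrix.one_kronecker_one]

lemma MP_sq (i j : Fin 3) : MP i j * MP i j = 1 := by
  have h1 : (1 : Matrix (Fin 2) (Fin 2) ℂ) * 1 = 1 := one_mul 1
  fin_cases i <;> fin_cases j <;>
    first
    | exact kron_sq sx_sq h1 | exact kron_sq h1 sx_sq | exact kron_sq sx_sq sx_sq
    | exact kron_sq h1 sy_sq | exact kron_sq sy_sq h1 | exact kron_sq sy_sq sy_sq
    | exact kron_sq sx_sq sy_sq | exact kron_sq sy_sq sx_sq | exact kron_sq sz_sq sz_sq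

lemma Proj_mul_same {p q : Fin 3 × Fin 3} (h : MP p.1 p.2 = MP q.1 q.2)
    {s t : ℝ} (hs : s = -1 ∨ s = 1) (ht : t = -1 ∨ t = 1) :
    Proj p s * Proj q t = if s = t then Proj p s else 0 := by
  have hV : MP q.1 q.2 * MP q.1 q.2 = 1 := MP_sq _ _
  have key : Proj p s * Proj q t =
      (4⁻¹ : ℂ) • (((1 : ℂ) + s * t) • (1 : Matrix (Fin 2 × Fin 2) (Fin 2 × Fin 2) ℂ)
        + ((s : ℂ) + t) • MP q.1 q.2) := by
    rw [Proj, Proj, h]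
    simp only [smul_mul_assoc, mul_smul_comm, smul_smul, add_mul, mul_add, one_mul, mul_one, hV]
    module
  rcases hs with hs | hs <;> rcases ht with ht | ht <;> subst hs <;> subst ht <;>
    rw [key] <;> norm_num <;> rw [Proj, h] <;> push_cast <;> module

lemma Proj_comm {p q : Fin 3 × Fin 3} (h : Commute (MP p.1 p.2) (MP q.1 q.2)) (s t : ℝ) :
    Commute (Proj p s) (Proj q t) := by
  show _ * _ = _ * _
  rw [Proj, Proj]
  simp only [smul_mul_assoc, mul_smul_comm, smul_smul, add_mul, mul_add, one_mul, mul_one]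
  rw [← h.eq]
  module

lemma Proj_one_eq (p : Fin 3 × Fin 3) :
    Proj p 1 = 1 - Proj p (-1) := by
  rw [Proj, Proj]; push_cast; module

lemma Mset_unique {u : HV} {a b : ℕ} (ha : u ∈ Mset a) (hb : u ∈ Mset b) : a = b := by
  by_contra hne
  rcases Nat.lt_or_ge a b with h | h
  · exact (ha.2 a le_rfl) (hb.1 a h)
  · rcases Nat.lt_or_ge b a with h' | h'
    · exact (hb.2 b le_rfl) (ha.1 b h')
    · exact hne (le_antisymm h' h)

lemma enc_int (p : Fin 3 × Fin 3) (x : ℝ) : ∃ m : ℤ, 27 * enc p x = m := by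
  unfold enc; split
  · exact ⟨(3 * (p.1 : ℕ) + (p.2 : ℕ) : ℕ), by push_cast; ring⟩
  · exact ⟨(18 + 3 * (p.1 : ℕ) + (p.2 : ℕ) : ℕ), by push_cast; ring⟩

lemma phi_eq (ρ : Matrix (Fin 2 × Fin 2) (Fin 2 × Fin 2) ℂ) (p : Fin 3 × Fin 3)
    {u : HV} {m : ℕ} (hu : u ∈ Mset m) :
    phi ρ p u = Function.update u m (enc p (chi ρ p u m)) := by
  have h : ∃ n, u ∈ Mset n := ⟨m, hu⟩
  rw [phi, dif_pos h, Mset_unique h.choose_spec hu]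

lemma update_mem {u : HV} {m : ℕ} (hu : u ∈ Mset m) {c : ℝ} (hc : ∃ z : ℤ, 27 * c = z) :
    Function.update u m c ∈ Mset (m + 1) := by
  constructor
  · intro i hi
    rcases Nat.lt_or_ge i m with h | h
    · rw [Function.update_of_ne (by omega)]; exact hu.1 i h
    · have : i = m := by omega
      subst this; rw [Function.update_self]; exact hc
  · intro i hi
    rw [Function.update_of_ne (by omega)]
    exact hu.2 i (by omega)

/-- A "good" hidden state: all coordinates in `(0,1)` and no coordinate a
multiple of `1/27`. -/
def GoodHV (u : HV) : Prop :=
  ∀ m, (0 < u m ∧ u m < 1) ∧ ¬∃ z : ℤ, 27 * u m = z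

/-- The state after `j` sequential measurements at positions `P 0, …, P (j-1)`. -/
def state (ρ : Matrix (Fin 2 × Fin 2) (Fin 2 × Fin 2) ℂ)
    (P : ℕ → Fin 3 × Fin 3) (u : HV) : ℕ → HV
  | 0 => u
  | j + 1 => phi ρ (P j) (state ρ P u j)

/-- The outcome of the `(i+1)`-th measurement. -/
def outc (ρ : Matrix (Fin 2 × Fin 2) (Fin 2 × Fin 2) ℂ)
    (P : ℕ → Fin 3 × Fin 3) (u : HV) (i : ℕ) : ℝ :=
  chi ρ (P i) (state ρ P u i) i

lemma state_spec (ρ : Matrix (Fin 2 × Fin 2) (Fin 2 × Fin 2) ℂ)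
    (P : ℕ → Fin 3 × Fin 3) {u : HV} (hu : GoodHV u) :
    ∀ j, state ρ P u j ∈ Mset j ∧ (∀ i, j ≤ i → state ρ P u j i = u i) := by
  intro j
  induction j with
  | zero =>
    refine ⟨⟨by omega, fun i _ => (hu i).2⟩, fun i _ => rfl⟩
  | succ j ih =>
    have h1 : state ρ P u (j+1) =
        Function.update (state ρ P u j) j (enc (P j) (chi ρ (P j) (state ρ P u j) j)) := by
      show phi ρ (P j) (state ρ P u j) = _
      exact phi_eq ρ (P j) ih.1
    refine ⟨h1 ▸ update_mem ih.1 (enc_int _ _), ?_⟩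
    intro i hi
    rw [h1, Function.update_of_ne (by omega)]
    exact ih.2 i (by omega)

lemma state_coord (ρ : Matrix (Fin 2 × Fin 2) (Fin 2 × Fin 2) ℂ)
    (P : ℕ → Fin 3 × Fin 3) {u : HV} (hu : GoodHV u) {i j : ℕ} (hij : i < j) :
    state ρ P u j i = enc (P i) (outc ρ P u i) := by
  induction j with
  | zero => omega
  | succ j ih =>
    have h1 : state ρ P u (j+1) =
        Function.update (state ρ P u j) j (enc (P j) (chi ρ (P j) (state ρ P u j) j)) :=
      phi_eq ρ (P j) (state_spec ρ P hu j).1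
    rcases Nat.lt_or_ge i j with h | h
    · rw [h1, Function.update_of_ne (by omega)]; exact ih h
    · have : i = j := by omega
      subst this
      rw [h1, Function.update_self]
      rfl

lemma state_congr (ρ : Matrix (Fin 2 × Fin 2) (Fin 2 × Fin 2) ℂ)
    {P Q : ℕ → Fin 3 × Fin 3} (u : HV) {j : ℕ} (h : ∀ i < j, P i = Q i) :
    state ρ P u j = state ρ Q u j := by
  induction j with
  | zero => rfl
  | succ j ih =>
    show phi ρ (P j) _ = phi ρ (Q j) _
    rw [ih (fun i hi => h i (by omega)), h j (by omega)]

lemma chi_eq (ρ : Matrix (Fin 2 × Fin 2) (Fin 2 × Fin 2) ℂ) (p : Fin 3 × Fin 3)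
    {u : HV} {n : ℕ} (h1 : u n < 1) :
    chi ρ p u n = if u n < F ρ p (-1) u n then -1 else 1 := by
  have hF1 : F ρ p 1 u n = 1 := by rw [F]; norm_num
  by_cases h : u n < F ρ p (-1) u n
  · have hset : {x : ℝ | (x = -1 ∨ x = 1) ∧ F ρ p x u n > u n} = {-1, 1} := by
      ext x
      simp only [Set.mem_setOf_eq, Set.mem_insert_iff, Set.mem_singleton_iff]
      constructor
      · rintro ⟨hx, _⟩; exact hx
      · rintro (rfl | rfl)
        · exact ⟨Or.inl rfl, h⟩
        · exact ⟨Or.inr rfl, by rw [hF1]; exact h1⟩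
    rw [chi, hset, csInf_pair, if_pos h]
    exact min_eq_left (by norm_num)
  · have hset : {x : ℝ | (x = -1 ∨ x = 1) ∧ F ρ p x u n > u n} = {1} := by
      ext x
      simp only [Set.mem_setOf_eq, Set.mem_singleton_iff]
      constructor
      · rintro ⟨hx | hx, hgt⟩
        · exact absurd (hx ▸ hgt) h
        · exact hx
      · rintro rfl
        exact ⟨Or.inr rfl, by rw [hF1]; exact h1⟩
    rw [chi, hset, csInf_singleton, if_neg h]

lemma gOut_eq {u : HV} {j : ℕ} (hu : u ∈ Mset (j + 1)) :
    gOut u = Real.sign (2 * u j - 1) := by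
  have h : ∃ n, u ∈ Mset (n + 1) := ⟨j, hu⟩
  have hc : h.choose = j := by
    have := Mset_unique h.choose_spec hu
    omega
  rw [gOut, dif_pos h, hc]

lemma sign_enc (p : Fin 3 × Fin 3) {x : ℝ} (hx : x = -1 ∨ x = 1) :
    Real.sign (2 * enc p x - 1) = x := by
  have ha : (p.1 : ℕ) ≤ 2 := by omega
  have hb : (p.2 : ℕ) ≤ 2 := by omega
  rcases hx with rfl | rfl
  · rw [enc, if_pos rfl]
    apply Real.sign_of_neg
    have hN : ((3 * (p.1 : ℕ) + (p.2 : ℕ) : ℕ) : ℝ) ≤ 8 := by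
      have : (3 * (p.1 : ℕ) + (p.2 : ℕ) : ℕ) ≤ 8 := by omega
      exact_mod_cast this
    nlinarith
  · rw [enc, if_neg (by norm_num)]
    apply Real.sign_of_pos
    have hN : (18 : ℝ) ≤ ((18 + 3 * (p.1 : ℕ) + (p.2 : ℕ) : ℕ) : ℝ) := by
      have : 18 ≤ (18 + 3 * (p.1 : ℕ) + (p.2 : ℕ) : ℕ) := by omega
      exact_mod_cast this
    nlinarith

lemma dec_enc {u : HV} {k : ℕ} {p : Fin 3 × Fin 3} {x : ℝ} (hx : x = -1 ∨ x = 1)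
    (h : u k = enc p x) :
    decPos u k = p ∧ decSign u k = x := by
  have ha : (p.1 : ℕ) < 3 := p.1.isLt
  have hb : (p.2 : ℕ) < 3 := p.2.isLt
  rcases hx with rfl | rfl
  · have hcode : code u k = 3 * (p.1 : ℕ) + (p.2 : ℕ) := by
      rw [code, h, enc, if_pos rfl,
        show 27 * (((3 * (p.1 : ℕ) + (p.2 : ℕ) : ℕ) : ℝ) / 27)
          = ((3 * (p.1 : ℕ) + (p.2 : ℕ) : ℕ) : ℝ) by ring,
        Int.floor_natCast]
      exact Int.toNat_natCast _
    refine ⟨?_, ?_⟩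
    · refine Prod.ext ?_ ?_ <;> apply Fin.ext <;>
        simp only [decPos, hcode] <;> omega
    · rw [decSign, hcode, if_pos (by omega)]
  · have hcode : code u k = 18 + 3 * (p.1 : ℕ) + (p.2 : ℕ) := by
      rw [code, h, enc, if_neg (by norm_num),
        show 27 * (((18 + 3 * (p.1 : ℕ) + (p.2 : ℕ) : ℕ) : ℝ) / 27)
          = ((18 + 3 * (p.1 : ℕ) + (p.2 : ℕ) : ℕ) : ℝ) by ring,
        Int.floor_natCast]
      exact Int.toNat_natCast _
    refine ⟨?_, ?_⟩
    · refine Prod.ext ?_ ?_ <;> apply Fin.ext <;>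
        simp only [decPos, hcode] <;> omega
    · rw [decSign, hcode, if_neg (by omega)]

lemma outc_pm (ρ : Matrix (Fin 2 × Fin 2) (Fin 2 × Fin 2) ℂ)
    (P : ℕ → Fin 3 × Fin 3) {u : HV} (hu : GoodHV u) (i : ℕ) :
    outc ρ P u i = -1 ∨ outc ρ P u i = 1 := by
  have h1 : state ρ P u i i = u i := (state_spec ρ P hu i).2 i le_rfl
  rw [outc, chi_eq ρ (P i) (h1 ▸ (hu i).1.2)]
  split <;> simp

lemma hist_state (ρ : Matrix (Fin 2 × Fin 2) (Fin 2 × Fin 2) ℂ)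
    (P : ℕ → Fin 3 × Fin 3) {u : HV} (hu : GoodHV u) {m j : ℕ} (hmj : m ≤ j) :
    hist (state ρ P u j) m =
      ((List.range m).map fun i => Proj (P i) (outc ρ P u i)).prod := by
  rw [hist]
  congr 1
  apply List.map_congr_left
  intro i hi
  have hi' : i < m := List.mem_range.mp hi
  have hcoord : state ρ P u j i = enc (P i) (outc ρ P u i) :=
    state_coord ρ P hu (by omega)
  obtain ⟨h1, h2⟩ := dec_enc (outc_pm ρ P hu i) hcoord
  rw [h1, h2]

lemma outc_eq (ρ : Matrix (Fin 2 × Fin 2) (Fin 2 × Fin 2) ℂ)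
    (P : ℕ → Fin 3 × Fin 3) {u : HV} (hu : GoodHV u) (m : ℕ) :
    outc ρ P u m =
      if u m < ((ρ * (((List.range m).map fun i => Proj (P i) (outc ρ P u i)).prod)
            * Proj (P m) (-1)).trace).re
          / ((ρ * (((List.range m).map fun i => Proj (P i) (outc ρ P u i)).prod)).trace).re
      then -1 else 1 := by
  have h1 : state ρ P u m m = u m := (state_spec ρ P hu m).2 m le_rfl
  rw [outc, chi_eq ρ (P m) (h1 ▸ (hu m).1.2), F, if_pos rfl,
    hist_state ρ P hu (le_refl m), h1]

lemma runPhi_take (ρ : Matrix (Fin 2 × Fin 2) (Fin 2 × Fin 2) ℂ) {N : ℕ}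
    (pos : Fin N → Fin 3 × Fin 3) (P : ℕ → Fin 3 × Fin 3)
    (hP : ∀ (i : ℕ) (hi : i < N), P i = pos ⟨i, hi⟩) (u : HV) :
    ∀ m, m ≤ N → runPhi ρ ((List.ofFn pos).take m) u = state ρ P u m := by
  intro m
  induction m with
  | zero => intro _; rfl
  | succ m ih =>
    intro hm
    have hlt : m < (List.ofFn pos).length := by simp; omega
    rw [List.take_succ, runPhi, List.foldl_append, List.getElem?_eq_getElem hlt]
    have hget : (List.ofFn pos)[m] = pos ⟨m, by omega⟩ := by
      simp [List.getElem_ofFn]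
    rw [hget]
    show phi ρ (pos ⟨m, _⟩) (runPhi ρ ((List.ofFn pos).take m) u) = _
    rw [ih (by omega), ← hP m (by omega)]
    rfl

lemma good_compl_null (μ : Measure HV) (hμ : IsUniformProductMeasure μ) :
    μ {u : HV | ¬ GoodHV u} = 0 := by
  classical
  set C : Set ℝ := {x | ∃ z : ℤ, 27 * x = z} with hC
  have hCc : C.Countable := by
    have hsub : C ⊆ Set.range (fun z : ℤ => (z : ℝ) / 27) := by
      rintro x ⟨z, hz⟩
      exact ⟨z, by field_simp; linarith⟩
    exact (Set.countable_range _).mono hsub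
  set B : Set ℝ := {x : ℝ | ¬((0 < x ∧ x < 1) ∧ ¬∃ z : ℤ, 27 * x = z)} with hB
  have hBm : MeasurableSet B := by
    have : B = (Set.Ioo (0:ℝ) 1 ∩ Cᶜ)ᶜ := by
      ext x
      simp [hB, hC, Set.mem_Ioo, and_assoc]
    rw [this]
    exact (measurableSet_Ioo.inter hCc.measurableSet.compl).compl
  have hBvol : volume (B ∩ Set.Icc 0 1) = 0 := by
    have hsub : B ∩ Set.Icc 0 1 ⊆ {0, 1} ∪ C := by
      rintro x ⟨hx, h0, h1⟩
      by_cases hCx : x ∈ C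
      · exact Or.inr hCx
      · left
        simp only [hB, Set.mem_setOf_eq, not_and, not_not] at hx
        have : ¬(0 < x ∧ x < 1) := fun h => hCx (hx h)
        rcases eq_or_lt_of_le h0 with h | h
        · exact Or.inl h.symm
        · rcases eq_or_lt_of_le h1 with h' | h'
          · exact Or.inr h'
          · exact absurd ⟨h, h'⟩ this
    refine measure_mono_null hsub ?_
    exact (((Set.countable_singleton _).insert _).union hCc).measure_zero _
  have hnull : ∀ m : ℕ, μ {u : HV | u m ∈ B} = 0 := by
    intro m
    have key := hμ {m} (fun k => if k = m then B else Set.univ)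
      (by intro k; split <;> [exact hBm; exact MeasurableSet.univ])
    have hset : {u : HV | ∀ k ∈ ({m} : Finset ℕ), u k ∈ (if k = m then B else Set.univ)}
        = {u : HV | u m ∈ B} := by
      ext u
      simp
    rw [hset] at key
    rw [key, Finset.prod_singleton]
    show volume ((if m = m then B else Set.univ) ∩ Set.Icc 0 1) = 0
    rw [if_pos rfl]
    exact hBvol
  refine measure_mono_null ?_ (measure_iUnion_null hnull)
  intro u hu
  simp only [Set.mem_setOf_eq, GoodHV, not_forall] at hu
  obtain ⟨m, hm⟩ := hu
  exact Set.mem_iUnion.mpr ⟨m, hm⟩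

lemma cylinder_measure (μ : Measure HV) (hμ : IsUniformProductMeasure μ)
    (t : ℕ → Set ℝ) (ht : ∀ k, MeasurableSet (t k)) (m : ℕ) :
    μ {u : HV | ∀ i < m, u i ∈ t i}
      = ∏ i ∈ Finset.range m, volume (t i ∩ Set.Icc 0 1) := by
  classical
  have key := hμ (Finset.range m) (fun k => if k < m then t k else Set.univ)
    (by intro k; split <;> [exact ht k; exact MeasurableSet.univ])
  have hset : {u : HV | ∀ k ∈ Finset.range m, u k ∈ (if k < m then t k else Set.univ)}
      = {u : HV | ∀ i < m, u i ∈ t i} := by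
    ext u
    simp only [Set.mem_setOf_eq, Finset.mem_range]
    constructor
    · intro h i hi
      have := h i hi
      rwa [if_pos hi] at this
    · intro h i hi
      rw [if_pos hi]
      exact h i hi
  rw [hset] at key
  rw [key]
  refine Finset.prod_congr rfl fun i hi => ?_
  show volume ((if i < m then t i else Set.univ) ∩ Set.Icc 0 1) = _
  rw [if_pos (Finset.mem_range.mp hi)]

lemma measure_eq_of_eq_on_good (μ : Measure HV) (hμ : IsUniformProductMeasure μ)
    {E Cyl : Set HV} (h : ∀ u, GoodHV u → (u ∈ E ↔ u ∈ Cyl)) : μ E = μ Cyl := by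
  have hnull := good_compl_null μ hμ
  have h1 : E ⊆ Cyl ∪ {u | ¬ GoodHV u} := by
    intro u hu
    by_cases hg : GoodHV u
    · exact Or.inl ((h u hg).mp hu)
    · exact Or.inr hg
  have h2 : Cyl ⊆ E ∪ {u | ¬ GoodHV u} := by
    intro u hu
    by_cases hg : GoodHV u
    · exact Or.inl ((h u hg).mpr hu)
    · exact Or.inr hg
  apply le_antisymm
  · calc μ E ≤ μ (Cyl ∪ {u | ¬ GoodHV u}) := measure_mono h1
      _ ≤ μ Cyl + μ {u | ¬ GoodHV u} := measure_union_le _ _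
      _ = μ Cyl := by rw [hnull, add_zero]
  · calc μ Cyl ≤ μ (E ∪ {u | ¬ GoodHV u}) := measure_mono h2
      _ ≤ μ E + μ {u | ¬ GoodHV u} := measure_union_le _ _
      _ = μ E := by rw [hnull, add_zero]

lemma vol_Iio_nonpos {c : ℝ} (hc : c ≤ 0) : volume (Set.Iio c ∩ Set.Icc 0 1) = 0 := by
  have : Set.Iio c ∩ Set.Icc 0 1 = ∅ := by
    rw [Set.eq_empty_iff_forall_notMem]
    rintro x ⟨h1, h2, _⟩
    simp only [Set.mem_Iio] at h1
    linarith
  rw [this, measure_empty]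

lemma vol_Ici_ge_one {c : ℝ} (hc : 1 ≤ c) : volume (Set.Ici c ∩ Set.Icc 0 1) = 0 := by
  have hsub : Set.Ici c ∩ Set.Icc 0 1 ⊆ Set.Icc c 1 := by
    rintro x ⟨h1, _, h3⟩
    exact ⟨h1, h3⟩
  refine measure_mono_null hsub ?_
  rw [Real.volume_Icc, ENNReal.ofReal_eq_zero]
  linarith

lemma vol_Iio_one : volume (Set.Iio (1:ℝ) ∩ Set.Icc 0 1) = 1 := by
  have : Set.Iio (1:ℝ) ∩ Set.Icc 0 1 = Set.Ico 0 1 := by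
    ext x
    simp only [Set.mem_inter_iff, Set.mem_Iio, Set.mem_Icc, Set.mem_Ico]
    constructor
    · rintro ⟨h1, h2, _⟩; exact ⟨h2, h1⟩
    · rintro ⟨h1, h2⟩; exact ⟨h2, h1, le_of_lt h2⟩
  rw [this, Real.volume_Ico]
  norm_num

lemma vol_Ici_zero : volume (Set.Ici (0:ℝ) ∩ Set.Icc 0 1) = 1 := by
  have : Set.Ici (0:ℝ) ∩ Set.Icc 0 1 = Set.Icc 0 1 := by
    ext x
    simp only [Set.mem_inter_iff, Set.mem_Ici, Set.mem_Icc]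
    tauto
  rw [this, Real.volume_Icc]
  norm_num

/-- **Corollary 1.** Under the Sequential Measurements model, if a measurement
is repeated and no intervening incompatible measurements are performed, the
outcome μ-almost surely remains unchanged.  Here the `n+1` measurements are at
positions `pos 0, …, pos n` (so `n + 1 ≥ 2`), the last measured operator equals
the one measured at step `k` (`0`-indexed, `k ≤ n − 1`), and all operators
measured from step `k` onwards mutually commute.  Then for any ±1 outcomes:
if the last outcome differs from the `k`-th the event has measure zero, and if
it agrees the event has the same measure as the event for the first `n`
measurements alone. -/
theorem repeated_measurement_persistence
    (μ : Measure HV) (hμ : IsUniformProductMeasure μ)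
    (ρ : Matrix (Fin 2 × Fin 2) (Fin 2 × Fin 2) ℂ)
    (hρ : ρ.PosSemidef) (hρtr : ρ.trace = 1)
    (n : ℕ) (hn : 1 ≤ n) (pos : Fin (n + 1) → Fin 3 × Fin 3) (k : Fin n)
    (hrep : MP (pos (Fin.last n)).1 (pos (Fin.last n)).2 =
      MP (pos k.castSucc).1 (pos k.castSucc).2)
    (hcomm : ∀ a b : Fin (n + 1), (k : ℕ) ≤ (a : ℕ) → (k : ℕ) ≤ (b : ℕ) →
      Commute (MP (pos a).1 (pos a).2) (MP (pos b).1 (pos b).2))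
    (s : Fin (n + 1) → ℝ) (hs : ∀ j, s j = -1 ∨ s j = 1) :
    (s (Fin.last n) ≠ s k.castSucc → μ (seqEvent ρ pos s) = 0) ∧
    (s (Fin.last n) = s k.castSucc →
      μ (seqEvent ρ pos s) =
        μ (seqEvent ρ (fun j : Fin n => pos j.castSucc)
            (fun j : Fin n => s j.castSucc))) := by
  classical
  set PN : ℕ → Fin 3 × Fin 3 := fun i => pos ⟨min i n, by omega⟩ with hPN
  set sv : ℕ → ℝ := fun i => s ⟨min i n, by omega⟩ with hsv
  have hPNlt : ∀ (i : ℕ) (hi : i < n + 1), PN i = pos ⟨i, hi⟩ := by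
    intro i hi
    simp only [hPN]
    congr 1
    exact Fin.ext (by simp; omega)
  have hsvlt : ∀ (i : ℕ) (hi : i < n + 1), sv i = s ⟨i, hi⟩ := by
    intro i hi
    simp only [hsv]
    congr 1
    exact Fin.ext (by simp; omega)
  set Hs : ℕ → Matrix (Fin 2 × Fin 2) (Fin 2 × Fin 2) ℂ :=
    fun m => ((List.range m).map fun i => Proj (PN i) (sv i)).prod with hHs
  set c : ℕ → ℝ := fun m =>
    ((ρ * Hs m * Proj (PN m) (-1)).trace).re / ((ρ * Hs m).trace).re with hc
  set t : ℕ → Set ℝ := fun m =>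
    if sv m = -1 then Set.Iio (c m) else Set.Ici (c m) with ht
  have htm : ∀ m, MeasurableSet (t m) := by
    intro m
    simp only [ht]
    split
    exacts [measurableSet_Iio, measurableSet_Ici]
  have hsvpm : ∀ i, sv i = -1 ∨ sv i = 1 := fun i => hs _
  -- conditional step
  have hcond : ∀ (u : HV), GoodHV u → ∀ m, (∀ i < m, outc ρ PN u i = sv i) →
      (outc ρ PN u m = sv m ↔ u m ∈ t m) := by
    intro u hu m hm
    have hHsm : ((List.range m).map fun i => Proj (PN i) (outc ρ PN u i)).prod = Hs m := by
      simp only [hHs]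
      congr 1
      apply List.map_congr_left
      intro i hi
      rw [hm i (List.mem_range.mp hi)]
    have houtc := outc_eq ρ PN hu m
    rw [hHsm] at houtc
    have hcm : ((ρ * Hs m * Proj (PN m) (-1)).trace).re / ((ρ * Hs m).trace).re = c m := by
      simp only [hc]
    rw [hcm] at houtc
    rcases hsvpm m with h | h
    · rw [h, houtc]
      simp only [ht, if_pos h, Set.mem_Iio]
      split_ifs with h'
      · simp [h']
      · constructor
        · intro hh; norm_num at hh
        · intro hh; exact absurd hh h'
    · rw [h, houtc]
      simp only [ht, if_neg (show ¬ sv m = -1 by rw [h]; norm_num), Set.mem_Ici]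
      split_ifs with h'
      · constructor
        · intro hh; norm_num at hh
        · intro hh; linarith
      · constructor
        · intro _; exact not_lt.mp h'
        · intro _; rfl
  have key1 : ∀ (u : HV), GoodHV u → ∀ m,
      ((∀ i < m, outc ρ PN u i = sv i) ↔ (∀ i < m, u i ∈ t i)) := by
    intro u hu m
    induction m with
    | zero => simp
    | succ m ih =>
      constructor
      · intro h i hi
        have hm : ∀ j < m, outc ρ PN u j = sv j := fun j hj => h j (by omega)
        rcases Nat.lt_succ_iff_lt_or_eq.mp hi with hi' | rfl
        · exact (ih.mp hm) i hi'
        · exact (hcond u hu i hm).mp (h i (by omega))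
      · intro h i hi
        have hm : ∀ j < m, outc ρ PN u j = sv j := ih.mpr fun j hj => h j (by omega)
        rcases Nat.lt_succ_iff_lt_or_eq.mp hi with hi' | rfl
        · exact hm i hi'
        · exact (hcond u hu i hm).mpr (h i (by omega))
  -- outcomes of runs
  have hgOutRun : ∀ (u : HV), GoodHV u → ∀ kk : ℕ, kk < n + 1 →
      gOut (runPhi ρ ((List.ofFn pos).take (kk + 1)) u) = outc ρ PN u kk := by
    intro u hu kk hkk
    have hrun := runPhi_take ρ pos PN (fun i hi => hPNlt i hi) u (kk + 1) (by omega)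
    rw [hrun]
    have hmem : state ρ PN u (kk + 1) ∈ Mset (kk + 1) := (state_spec ρ PN hu (kk + 1)).1
    rw [gOut_eq hmem, state_coord ρ PN hu (Nat.lt_succ_self kk),
      sign_enc _ (outc_pm ρ PN hu kk)]
  have hEvent1 : ∀ u : HV, GoodHV u →
      (u ∈ seqEvent ρ pos s ↔ u ∈ {v : HV | ∀ i < n + 1, v i ∈ t i}) := by
    intro u hu
    have : u ∈ seqEvent ρ pos s ↔ ∀ i < n + 1, outc ρ PN u i = sv i := by
      constructor
      · intro h i hi
        have := h ⟨i, hi⟩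
        rw [hgOutRun u hu i hi] at this
        rw [this, hsvlt i hi]
      · intro h kk
        show gOut (runPhi ρ ((List.ofFn pos).take ((kk : ℕ) + 1)) u) = s kk
        rw [hgOutRun u hu kk kk.isLt, h kk kk.isLt, hsvlt kk kk.isLt]
    rw [this]
    exact key1 u hu (n + 1)
  have hEvent2 : ∀ u : HV, GoodHV u →
      (u ∈ seqEvent ρ (fun j : Fin n => pos j.castSucc) (fun j : Fin n => s j.castSucc)
        ↔ u ∈ {v : HV | ∀ i < n, v i ∈ t i}) := by
    intro u hu
    have hP' : ∀ (i : ℕ) (hi : i < n), PN i = (fun j : Fin n => pos j.castSucc) ⟨i, hi⟩ := by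
      intro i hi
      simp only [hPN]
      congr 1
      exact Fin.ext (by simp [Fin.castSucc, Fin.castAdd, Fin.castLE]; omega)
    have hgOutRun' : ∀ kk : ℕ, kk < n →
        gOut (runPhi ρ ((List.ofFn fun j : Fin n => pos j.castSucc).take (kk + 1)) u)
          = outc ρ PN u kk := by
      intro kk hkk
      have hrun := runPhi_take ρ (fun j : Fin n => pos j.castSucc) PN hP' u (kk + 1) (by omega)
      rw [hrun]
      have hmem : state ρ PN u (kk + 1) ∈ Mset (kk + 1) := (state_spec ρ PN hu (kk + 1)).1
      rw [gOut_eq hmem, state_coord ρ PN hu (Nat.lt_succ_self kk),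
        sign_enc _ (outc_pm ρ PN hu kk)]
    have hsv' : ∀ (i : ℕ) (hi : i < n), sv i = s (Fin.castSucc ⟨i, hi⟩) := by
      intro i hi
      rw [hsvlt i (by omega)]
      exact congrArg s (Fin.ext (by simp))
    have : u ∈ seqEvent ρ (fun j : Fin n => pos j.castSucc) (fun j : Fin n => s j.castSucc)
        ↔ ∀ i < n, outc ρ PN u i = sv i := by
      constructor
      · intro h i hi
        have := h ⟨i, hi⟩
        rw [hgOutRun' i hi] at this
        rw [this, hsv' i hi]
      · intro h kk
        show gOut (runPhi ρ ((List.ofFn fun j : Fin n => pos j.castSucc).take ((kk : ℕ) + 1)) u)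
          = s kk.castSucc
        rw [hgOutRun' kk kk.isLt, h kk kk.isLt, hsv' kk kk.isLt]
    rw [this]
    exact key1 u hu n
  -- measures as products
  have hμ1 : μ (seqEvent ρ pos s)
      = ∏ i ∈ Finset.range (n + 1), volume (t i ∩ Set.Icc 0 1) := by
    rw [measure_eq_of_eq_on_good μ hμ hEvent1, cylinder_measure μ hμ t htm (n + 1)]
  have hμ2 : μ (seqEvent ρ (fun j : Fin n => pos j.castSucc) (fun j : Fin n => s j.castSucc))
      = ∏ i ∈ Finset.range n, volume (t i ∩ Set.Icc 0 1) := by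
    rw [measure_eq_of_eq_on_good μ hμ hEvent2, cylinder_measure μ hμ t htm n]
  -- positivity of the trace denominators
  have hstep : ∀ m, Hs (m + 1) = Hs m * Proj (PN m) (sv m) := by
    intro m
    simp only [hHs]
    rw [List.range_succ, List.map_append, List.prod_append]
    simp
  have hpos : ∀ m, (∀ j < m, volume (t j ∩ Set.Icc 0 1) ≠ 0) →
      0 < ((ρ * Hs m).trace).re := by
    intro m
    induction m with
    | zero =>
      intro _
      have h0 : Hs 0 = 1 := by simp [hHs]
      rw [h0, mul_one, hρtr]
      norm_num
    | succ m ih =>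
      intro hL
      have hD := ih (fun j hj => hL j (by omega))
      have hLm := hL m (by omega)
      rcases hsvpm m with h | h
      · have hcm : 0 < c m := by
          by_contra hcm
          push_neg at hcm
          apply hLm
          simp only [ht, if_pos h]
          exact vol_Iio_nonpos hcm
        have hcm' : 0 < ((ρ * Hs m * Proj (PN m) (-1)).trace).re / ((ρ * Hs m).trace).re := by
          have : c m = ((ρ * Hs m * Proj (PN m) (-1)).trace).re / ((ρ * Hs m).trace).re := by
            simp only [hc]
          linarith [this ▸ hcm]
        have hN : 0 < ((ρ * Hs m * Proj (PN m) (-1)).trace).re := by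
          rcases div_pos_iff.mp hcm' with ⟨h1, _⟩ | ⟨_, h2⟩
          · exact h1
          · linarith
        rw [hstep m, h, ← mul_assoc]
        exact hN
      · have hcm : c m < 1 := by
          by_contra hcm
          push_neg at hcm
          apply hLm
          simp only [ht, if_neg (show ¬ sv m = -1 by rw [h]; norm_num)]
          exact vol_Ici_ge_one hcm
        have hcm' : ((ρ * Hs m * Proj (PN m) (-1)).trace).re / ((ρ * Hs m).trace).re < 1 := by
          have : c m = ((ρ * Hs m * Proj (PN m) (-1)).trace).re / ((ρ * Hs m).trace).re := by
            simp only [hc]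
          linarith [this ▸ hcm]
        have hNlt : ((ρ * Hs m * Proj (PN m) (-1)).trace).re < ((ρ * Hs m).trace).re :=
          (div_lt_one hD).mp hcm'
        have hsplit : ρ * Hs (m + 1) = ρ * Hs m - ρ * Hs m * Proj (PN m) (-1) := by
          rw [hstep m, h, Proj_one_eq, mul_sub, mul_one, mul_sub, ← mul_assoc]
        rw [hsplit, Matrix.trace_sub, Complex.sub_re]
        linarith
  -- absorption
  have hPNn : PN n = pos (Fin.last n) := by
    rw [hPNlt n (by omega)]
    exact congrArg pos (Fin.ext (by simp [Fin.last]))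
  have hPNk : PN (k : ℕ) = pos k.castSucc := by
    rw [hPNlt (k : ℕ) (by omega)]
    exact congrArg pos (Fin.ext (by simp))
  have hMPk : MP (PN (k : ℕ)).1 (PN (k : ℕ)).2 = MP (PN n).1 (PN n).2 := by
    rw [hPNn, hPNk]
    exact hrep.symm
  have habs : ∀ x : ℝ, x = -1 ∨ x = 1 →
      Hs n * Proj (PN n) x = if sv (k : ℕ) = x then Hs n else 0 := by
    intro x hx
    have hkn : (k : ℕ) < n := k.isLt
    set Rest : Matrix (Fin 2 × Fin 2) (Fin 2 × Fin 2) ℂ :=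
      ((List.range (n - ((k : ℕ) + 1))).map
        ((fun i => Proj (PN i) (sv i)) ∘ (fun i => (k : ℕ) + 1 + i))).prod with hRest
    have hrange : List.range n = List.range ((k : ℕ) + 1)
        ++ (List.range (n - ((k : ℕ) + 1))).map (fun i => (k : ℕ) + 1 + i) := by
      rw [← List.range_add]
      congr 1
      omega
    have hsplitn : Hs n = Hs ((k : ℕ) + 1) * Rest := by
      simp only [hHs, hRest]
      rw [hrange, List.map_append, List.prod_append, List.map_map]
    have hcommRest : Commute (Proj (PN n) x) Rest := by
      apply Commute.list_prod_right
      intro y hy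
      obtain ⟨i, hi, rfl⟩ := List.mem_map.mp hy
      have hilt : (k : ℕ) + 1 + i < n + 1 := by
        have := List.mem_range.mp hi
        omega
      apply Proj_comm
      rw [hPNlt n (by omega), hPNlt ((k : ℕ) + 1 + i) hilt]
      exact hcomm ⟨n, by omega⟩ ⟨(k : ℕ) + 1 + i, hilt⟩ (show (k : ℕ) ≤ n by omega)
        (show (k : ℕ) ≤ (k : ℕ) + 1 + i by omega)
    have hsplitk : Hs ((k : ℕ) + 1) = Hs (k : ℕ) * Proj (PN (k : ℕ)) (sv (k : ℕ)) :=
      hstep (k : ℕ)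
    calc Hs n * Proj (PN n) x = Hs ((k : ℕ) + 1) * Rest * Proj (PN n) x := by rw [hsplitn]
      _ = Hs ((k : ℕ) + 1) * (Rest * Proj (PN n) x) := by rw [mul_assoc]
      _ = Hs ((k : ℕ) + 1) * (Proj (PN n) x * Rest) := by rw [hcommRest.eq]
      _ = Hs (k : ℕ) * (Proj (PN (k : ℕ)) (sv (k : ℕ)) * Proj (PN n) x) * Rest := by
          rw [hsplitk]; noncomm_ring
      _ = Hs (k : ℕ) * (if sv (k : ℕ) = x then Proj (PN (k : ℕ)) (sv (k : ℕ)) else 0) * Rest := by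
          rw [Proj_mul_same hMPk (hsvpm (k : ℕ)) hx]
      _ = if sv (k : ℕ) = x then Hs n else 0 := by
          split
          · rw [hsplitn, hsplitk]
          · rw [mul_zero, zero_mul]
  have hsvk : sv (k : ℕ) = s k.castSucc := by
    rw [hsvlt (k : ℕ) (by omega)]
    exact congrArg s (Fin.ext (by simp))
  have hsvn : sv n = s (Fin.last n) := by
    rw [hsvlt n (by omega)]
    exact congrArg s (Fin.ext (by simp [Fin.last]))
  -- the two conclusions
  constructor
  · intro hne
    have hne' : sv n ≠ sv (k : ℕ) := by rw [hsvn, hsvk]; exact hne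
    rw [hμ1, Finset.prod_range_succ]
    rcases hsvpm (k : ℕ) with hk | hk
    · -- sv k = -1, so sv n = 1
      have hn1 : sv n = 1 := by
        rcases hsvpm n with h | h
        · exact absurd (h.trans hk.symm) hne'
        · exact h
      by_cases hD : ((ρ * Hs n).trace).re = 0
      · obtain ⟨j, hj, hLj⟩ : ∃ j, j < n ∧ volume (t j ∩ Set.Icc 0 1) = 0 := by
          by_contra hno
          push_neg at hno
          exact absurd (hpos n fun j hj => hno j hj) (by rw [hD]; norm_num)
        rw [Finset.prod_eq_zero (Finset.mem_range.mpr hj) hLj, zero_mul]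
      · have hcn : c n = 1 := by
          have : ρ * Hs n * Proj (PN n) (-1) = ρ * Hs n := by
            rw [mul_assoc, habs (-1) (Or.inl rfl), if_pos hk]
          simp only [hc]
          rw [this, div_self hD]
        have hLn : volume (t n ∩ Set.Icc 0 1) = 0 := by
          simp only [ht, if_neg (show ¬ sv n = -1 by rw [hn1]; norm_num)]
          exact vol_Ici_ge_one (le_of_eq hcn.symm)
        rw [hLn, mul_zero]
    · -- sv k = 1, so sv n = -1
      have hn1 : sv n = -1 := by
        rcases hsvpm n with h | h
        · exact h
        · exact absurd (h.trans hk.symm) hne'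
      have hcn : c n = 0 := by
        have : ρ * Hs n * Proj (PN n) (-1) = 0 := by
          rw [mul_assoc, habs (-1) (Or.inl rfl), if_neg (show ¬ sv (k : ℕ) = -1 by rw [hk]; norm_num), mul_zero]
        simp only [hc]
        rw [this, Matrix.trace_zero]
        norm_num
      have hLn : volume (t n ∩ Set.Icc 0 1) = 0 := by
        simp only [ht, if_pos hn1]
        rw [hcn]
        exact vol_Iio_nonpos le_rfl
      rw [hLn, mul_zero]
  · intro heq
    have heq' : sv n = sv (k : ℕ) := by rw [hsvn, hsvk]; exact heq
    rw [hμ1, hμ2, Finset.prod_range_succ]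
    rcases hsvpm (k : ℕ) with hk | hk
    · -- sv k = -1 = sv n
      have hn1 : sv n = -1 := heq'.trans hk
      by_cases hD : ((ρ * Hs n).trace).re = 0
      · obtain ⟨j, hj, hLj⟩ : ∃ j, j < n ∧ volume (t j ∩ Set.Icc 0 1) = 0 := by
          by_contra hno
          push_neg at hno
          exact absurd (hpos n fun j hj => hno j hj) (by rw [hD]; norm_num)
        rw [Finset.prod_eq_zero (Finset.mem_range.mpr hj) hLj, zero_mul]
      · have hcn : c n = 1 := by
          have : ρ * Hs n * Proj (PN n) (-1) = ρ * Hs n := by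
            rw [mul_assoc, habs (-1) (Or.inl rfl), if_pos hk]
          simp only [hc]
          rw [this, div_self hD]
        have hLn : volume (t n ∩ Set.Icc 0 1) = 1 := by
          simp only [ht, if_pos hn1]
          rw [hcn]
          exact vol_Iio_one
        rw [hLn, mul_one]
    · -- sv k = 1 = sv n
      have hn1 : sv n = 1 := heq'.trans hk
      have hcn : c n = 0 := by
        have : ρ * Hs n * Proj (PN n) (-1) = 0 := by
          rw [mul_assoc, habs (-1) (Or.inl rfl), if_neg (show ¬ sv (k : ℕ) = -1 by rw [hk]; norm_num), mul_zero]
        simp only [hc]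
        rw [this, Matrix.trace_zero]
        norm_num
      have hLn : volume (t n ∩ Set.Icc 0 1) = 1 := by
        simp only [ht, if_neg (show ¬ sv n = -1 by rw [hn1]; norm_num)]
        rw [hcn]
        exact vol_Ici_zero
      rw [hLn, mul_one]

end
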